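/- arXiv:1001.3752 — 2 statements merged into one kernel-verified Lean document; each statement's English description precedes it below -/
import Mathlib

section
/- Let G be the cycle graph C_7 on 7 vertices and let F be any independent set of G with |F| ≤ 1. Define the link graph L_F as follows: its vertices are the vertices v ∉ F of G such that F ∪ {v} is an independent set of G, and two distinct such vertices u, w are adjacent in L_F exactly when F ∪ {u, w} is an independent set of G. Then L_F is a connected graph. -/
def IndepSet {α : Type*} (G : SimpleGraph α) (S : Finset α) : Prop :=
  ∀ ⦃u⦄, u ∈ S → ∀ ⦃v⦄, v ∈ S → ¬ G.Adj u v

def linkGraph {α : Type*} [DecidableEq α] (G : SimpleGraph α) (F : Finset α) :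
    SimpleGraph {v : α // v ∉ F ∧ IndepSet G (insert v F)} where
  Adj u w := u ≠ w ∧ IndepSet G (insert u.1 (insert w.1 F))
  symm := by
    constructor
    rintro u w ⟨h1, h2⟩
    exact ⟨h1.symm, by rwa [Finset.insert_comm]⟩
  loopless := ⟨fun u h => h.1 rfl⟩

instance {α : Type*} (G : SimpleGraph α) [DecidableRel G.Adj] (S : Finset α) :
    Decidable (IndepSet G S) :=
  decidable_of_iff (∀ u ∈ S, ∀ v ∈ S, ¬ G.Adj u v) Iff.rfl

instance {α : Type*} [DecidableEq α] (G : SimpleGraph α) [DecidableRel G.Adj] (F : Finset α) :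
    DecidableRel (linkGraph G F).Adj := fun u w =>
  show Decidable (u ≠ w ∧ IndepSet G (insert u.1 (insert w.1 F))) from inferInstance

/-- Proposition 1.6 (cohomological criterion for `S₂`): for every independent set `F`
of the cycle graph `C₇` with `|F| ≤ 1`, the link graph of `F` is connected. -/
theorem cycleGraph_seven_link_connected
    (F : Finset (Fin 7)) (hF : IndepSet (SimpleGraph.cycleGraph 7) F)
    (hcard : F.card ≤ 1) :
    (linkGraph (SimpleGraph.cycleGraph 7) F).Connected := by
  rw [SimpleGraph.connected_iff]
  interval_cases h : F.card
  · rw [Finset.card_eq_zero] at h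
    subst h
    exact ⟨by decide, ⟨⟨0, by decide⟩⟩⟩
  · rw [Finset.card_eq_one] at h
    obtain ⟨a, rfl⟩ := h
    fin_cases a <;>
      refine ⟨by decide, ?_⟩ <;>
      first
        | exact ⟨⟨2, by decide⟩⟩
        | exact ⟨⟨5, by decide⟩⟩
end

section
/- Let G be a tree (a connected acyclic finite simple graph) on 2n vertices (n ≥ 2) that is unmixed and has a bipartition (V, W) with |V| = |W| = n for which there exist maximal independent sets F_0 = V, F_1, …, F_n = W of G with |F_i ∩ F_{i+1}| = n − 1 for every i. Then G has precisely n vertices of degree one. -/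
/-- A maximal independent set: an independent set not properly contained in any
other independent set. -/
def MaxIndepSet {α : Type*} (G : SimpleGraph α) (S : Finset α) : Prop :=
  IndepSet G S ∧ ∀ ⦃T : Finset α⦄, IndepSet G T → S ⊆ T → T = S

/-- `G` is unmixed if all maximal independent sets have the same cardinality. -/
def Unmixed {α : Type*} (G : SimpleGraph α) : Prop :=
  ∀ ⦃S T : Finset α⦄, MaxIndepSet G S → MaxIndepSet G T → S.card = T.card

/-- `(V, W)` is a bipartition of `G`: the vertex set is the disjoint union of `V` and `W`
and every edge joins a vertex of `V` to a vertex of `W`. -/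
def IsBipartition {α : Type*} [Fintype α] [DecidableEq α]
    (G : SimpleGraph α) (V W : Finset α) : Prop :=
  Disjoint V W ∧ V ∪ W = Finset.univ ∧
    ∀ ⦃u v⦄, G.Adj u v → (u ∈ V ∧ v ∈ W) ∨ (u ∈ W ∧ v ∈ V)

lemma exists_max_indep {α : Type*} [Fintype α] [DecidableEq α] (G : SimpleGraph α)
    (S : Finset α) (hS : IndepSet G S) : ∃ T, MaxIndepSet G T ∧ S ⊆ T := by
  classical
  obtain ⟨T, hT, hmaxT⟩ := Finset.exists_max_image
    ((Finset.univ : Finset (Finset α)).filter (fun T => IndepSet G T ∧ S ⊆ T))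
    Finset.card ⟨S, by simp [hS]⟩
  simp only [Finset.mem_filter, Finset.mem_univ, true_and] at hT hmaxT
  refine ⟨T, ⟨hT.1, fun T' hT' hsub => ?_⟩, hT.2⟩
  exact (Finset.eq_of_subset_of_card_le hsub (hmaxT T' ⟨hT', hT.2.trans hsub⟩)).symm

/-- Remark after Corollary 1.7: a tree on `2n` vertices (`n ≥ 2`) which is unmixed
and has a bipartition `(V, W)` with `|V| = |W| = n` carrying a chain of maximal
independent sets `V = F₀, …, Fₙ = W` with consecutive intersections of cardinality
`n - 1` has precisely `n` vertices of degree one. -/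
theorem tree_S2_pendant_count {α : Type*} [Fintype α] [DecidableEq α]
    (G : SimpleGraph α) [DecidableRel G.Adj] (n : ℕ) (hn : 2 ≤ n)
    (htree : G.IsTree) (hcardα : Fintype.card α = 2 * n)
    (hunmixed : Unmixed G)
    (V W : Finset α) (hbip : IsBipartition G V W)
    (hV : V.card = n) (hW : W.card = n)
    (F : ℕ → Finset α)
    (hF0 : F 0 = V) (hFn : F n = W)
    (hmax : ∀ i ≤ n, MaxIndepSet G (F i))
    (hcard : ∀ i < n, (F i ∩ F (i + 1)).card = n - 1) :
    (Finset.univ.filter (fun v : α => G.degree v = 1)).card = n := by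
  classical
  have hdisj : Disjoint V W := hbip.1
  have hunion : V ∪ W = Finset.univ := hbip.2.1
  have hedge := hbip.2.2
  have hNα : Nonempty α := by
    rw [← Fintype.card_pos_iff]; omega
  have hcardF : ∀ i ≤ n, (F i).card = n := by
    intro i hi
    have h := hunmixed (hmax i hi) (hmax 0 (Nat.zero_le n))
    rwa [hF0, hV] at h
  -- extract the swapped vertices
  have hxex : ∀ i, ∃ a, i < n → F i \ F (i+1) = {a} := by
    intro i
    by_cases h : i < n
    · have h1 : (F i \ F (i+1)).card = 1 := by
        have h2 := Finset.card_inter_add_card_sdiff (F i) (F (i+1))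
        rw [hcard i h, hcardF i h.le] at h2
        omega
      obtain ⟨a, ha⟩ := Finset.card_eq_one.mp h1
      exact ⟨a, fun _ => ha⟩
    · exact ⟨Classical.arbitrary α, fun h' => absurd h' h⟩
  have hyex : ∀ i, ∃ a, i < n → F (i+1) \ F i = {a} := by
    intro i
    by_cases h : i < n
    · have h1 : (F (i+1) \ F i).card = 1 := by
        have h2 := Finset.card_inter_add_card_sdiff (F (i+1)) (F i)
        rw [Finset.inter_comm, hcard i h, hcardF (i+1) h] at h2
        omega
      obtain ⟨a, ha⟩ := Finset.card_eq_one.mp h1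
      exact ⟨a, fun _ => ha⟩
    · exact ⟨Classical.arbitrary α, fun h' => absurd h' h⟩
  choose x hxs using hxex
  choose y hys using hyex
  have hxFi : ∀ i < n, x i ∈ F i := by
    intro i hi
    have h : x i ∈ F i \ F (i+1) := by rw [hxs i hi]; exact Finset.mem_singleton_self _
    exact (Finset.mem_sdiff.mp h).1
  have hxnot : ∀ i < n, x i ∉ F (i+1) := by
    intro i hi
    have h : x i ∈ F i \ F (i+1) := by rw [hxs i hi]; exact Finset.mem_singleton_self _
    exact (Finset.mem_sdiff.mp h).2
  have hyF : ∀ i < n, y i ∈ F (i+1) := by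
    intro i hi
    have h : y i ∈ F (i+1) \ F i := by rw [hys i hi]; exact Finset.mem_singleton_self _
    exact (Finset.mem_sdiff.mp h).1
  have hynot : ∀ i < n, y i ∉ F i := by
    intro i hi
    have h : y i ∈ F (i+1) \ F i := by rw [hys i hi]; exact Finset.mem_singleton_self _
    exact (Finset.mem_sdiff.mp h).2
  have hsub1 : ∀ i < n, F i ⊆ F (i+1) ∪ {x i} := by
    intro i hi a ha
    by_cases h : a ∈ F (i+1)
    · exact Finset.mem_union_left _ h
    · have h2 : a ∈ F i \ F (i+1) := Finset.mem_sdiff.mpr ⟨ha, h⟩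
      rw [hxs i hi] at h2
      exact Finset.mem_union_right _ h2
  have hsub2 : ∀ i < n, F (i+1) ⊆ F i ∪ {y i} := by
    intro i hi a ha
    by_cases h : a ∈ F i
    · exact Finset.mem_union_left _ h
    · have h2 : a ∈ F (i+1) \ F i := Finset.mem_sdiff.mpr ⟨ha, h⟩
      rw [hys i hi] at h2
      exact Finset.mem_union_right _ h2
  -- the matching
  have hadj : ∀ i < n, G.Adj (x i) (y i) := by
    intro i hi
    have hni : ¬ IndepSet G (insert (y i) (F i)) := by
      intro hind
      have h := (hmax i hi.le).2 hind (Finset.subset_insert _ _)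
      have h2 : y i ∈ F i := h ▸ Finset.mem_insert_self _ _
      exact hynot i hi h2
    unfold IndepSet at hni
    push_neg at hni
    obtain ⟨u, hu, v, hv, huv⟩ := hni
    have hFi := (hmax i hi.le).1
    have key : ∀ w ∈ F i, G.Adj (y i) w → w = x i := by
      intro w hw hadjw
      by_contra hne
      have hwF : w ∈ F (i+1) := by
        rcases Finset.mem_union.mp (hsub1 i hi hw) with h | h
        · exact h
        · exact absurd (Finset.mem_singleton.mp h) hne
      exact (hmax (i+1) hi).1 (hyF i hi) hwF hadjw
    rcases Finset.mem_insert.mp hu with hu1 | hu2 <;>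
      rcases Finset.mem_insert.mp hv with hv1 | hv2
    · subst hu1; subst hv1; exact absurd huv (G.loopless.irrefl _)
    · subst hu1
      have h := key v hv2 huv
      rw [h] at huv
      exact huv.symm
    · subst hv1
      have h := key u hu2 huv.symm
      rw [h] at huv
      exact huv
    · exact absurd huv (hFi hu2 hv2)
  -- counting intersections with V
  have hsteple : ∀ i < n, (F i ∩ V).card ≤ (F (i+1) ∩ V).card + 1 := by
    intro i hi
    have hss : F i ∩ V ⊆ (F (i+1) ∩ V) ∪ {x i} := by
      intro a ha
      obtain ⟨h1, h2⟩ := Finset.mem_inter.mp ha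
      rcases Finset.mem_union.mp (hsub1 i hi h1) with h | h
      · exact Finset.mem_union_left _ (Finset.mem_inter.mpr ⟨h, h2⟩)
      · exact Finset.mem_union_right _ h
    calc (F i ∩ V).card ≤ ((F (i+1) ∩ V) ∪ {x i}).card := Finset.card_le_card hss
      _ ≤ (F (i+1) ∩ V).card + 1 := by
          have h := Finset.card_union_le (F (i+1) ∩ V) {x i}
          simpa using h
  have ha0 : (F 0 ∩ V).card = n := by rw [hF0, Finset.inter_self, hV]
  have han : (F n ∩ V).card = 0 := by
    rw [hFn, Finset.card_eq_zero]
    exact Finset.disjoint_iff_inter_eq_empty.mp hdisj.symm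
  have hlow : ∀ i ≤ n, n ≤ (F i ∩ V).card + i := by
    intro i hi
    induction i with
    | zero => simpa using ha0.ge
    | succ k ih =>
      have hk : k < n := Nat.lt_of_succ_le hi
      have h1 := hsteple k hk
      have h2 := ih hk.le
      omega
  have hup : ∀ k ≤ n, (F (n - k) ∩ V).card ≤ k := by
    intro k hk
    induction k with
    | zero => simpa using han.le
    | succ k ih =>
      have h1 : n - (k+1) < n := by omega
      have h2 := hsteple (n - (k+1)) h1
      have h3 : n - (k+1) + 1 = n - k := by omega
      rw [h3] at h2
      have h4 := ih (by omega)
      omega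
  have haeq : ∀ i ≤ n, (F i ∩ V).card = n - i := by
    intro i hi
    have h1 := hlow i hi
    have h2 := hup (n - i) (by omega)
    rw [show n - (n - i) = i by omega] at h2
    omega
  have hxV : ∀ i < n, x i ∈ V := by
    intro i hi
    by_contra hxe
    have hsubV : F i ∩ V ⊆ F (i+1) ∩ V := by
      intro a ha
      obtain ⟨h1, h2⟩ := Finset.mem_inter.mp ha
      rcases Finset.mem_union.mp (hsub1 i hi h1) with h | h
      · exact Finset.mem_inter.mpr ⟨h, h2⟩
      · rw [Finset.mem_singleton.mp h] at h2; exact absurd h2 hxe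
    have h := Finset.card_le_card hsubV
    rw [haeq i hi.le, haeq (i+1) hi] at h
    omega
  have hyW : ∀ i < n, y i ∈ W := by
    intro i hi
    rcases hedge (hadj i hi) with ⟨_, h⟩ | ⟨h, _⟩
    · exact h
    · exact absurd h (Finset.disjoint_left.mp hdisj (hxV i hi))
  have hynV : ∀ i < n, y i ∉ V := fun i hi h =>
    Finset.disjoint_left.mp hdisj h (hyW i hi)
  have hxnW : ∀ i < n, x i ∉ W := fun i hi h =>
    Finset.disjoint_left.mp hdisj (hxV i hi) h
  -- chains
  have hchainV : ∀ i < n, F (i+1) ∩ V ⊆ F i ∩ V := by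
    intro i hi a ha
    obtain ⟨h1, h2⟩ := Finset.mem_inter.mp ha
    rcases Finset.mem_union.mp (hsub2 i hi h1) with h | h
    · exact Finset.mem_inter.mpr ⟨h, h2⟩
    · rw [Finset.mem_singleton.mp h] at h2; exact absurd h2 (hynV i hi)
  have hchainW : ∀ i < n, F i ∩ W ⊆ F (i+1) ∩ W := by
    intro i hi a ha
    obtain ⟨h1, h2⟩ := Finset.mem_inter.mp ha
    rcases Finset.mem_union.mp (hsub1 i hi h1) with h | h
    · exact Finset.mem_inter.mpr ⟨h, h2⟩
    · rw [Finset.mem_singleton.mp h] at h2; exact absurd h2 (hxnW i hi)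
  have hchainV' : ∀ i j, i ≤ j → j ≤ n → F j ∩ V ⊆ F i ∩ V := by
    intro i j hij hjn
    induction j with
    | zero =>
      have h : i = 0 := Nat.le_antisymm hij (Nat.zero_le i)
      subst h; exact subset_rfl
    | succ k ih =>
      rcases Nat.eq_or_lt_of_le hij with h | h
      · subst h; exact subset_rfl
      · exact (hchainV k (by omega)).trans (ih (by omega) (by omega))
  have hchainW' : ∀ i j, i ≤ j → j ≤ n → F i ∩ W ⊆ F j ∩ W := by
    intro i j hij hjn
    induction j with
    | zero =>
      have h : i = 0 := Nat.le_antisymm hij (Nat.zero_le i)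
      subst h; exact subset_rfl
    | succ k ih =>
      rcases Nat.eq_or_lt_of_le hij with h | h
      · subst h; exact subset_rfl
      · exact (ih (by omega) (by omega)).trans (hchainW k (by omega))
  have hxlater : ∀ i j, i < j → j ≤ n → x i ∉ F j := by
    intro i j hij hjn h
    have hx2 : x i ∈ F j ∩ V :=
      Finset.mem_inter.mpr ⟨h, hxV i (lt_of_lt_of_le hij hjn)⟩
    have h3 := hchainV' (i+1) j hij hjn hx2
    exact hxnot i (lt_of_lt_of_le hij hjn) (Finset.mem_inter.mp h3).1
  have hyearlier : ∀ i j, i < j → j ≤ n → y i ∈ F j := by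
    intro i j hij hjn
    have hy2 : y i ∈ F (i+1) ∩ W :=
      Finset.mem_inter.mpr ⟨hyF i (lt_of_lt_of_le hij hjn), hyW i (lt_of_lt_of_le hij hjn)⟩
    exact (Finset.mem_inter.mp (hchainW' (i+1) j hij hjn hy2)).1
  -- injectivity
  have hxinj : ∀ i < n, ∀ j < n, x i = x j → i = j := by
    intro i hi j hj hxy
    by_contra hne
    rcases Nat.lt_or_ge i j with h | h
    · exact hxlater i j h hj.le (hxy ▸ hxFi j hj)
    · have h2 : j < i := by omega
      exact hxlater j i h2 hi.le (hxy ▸ hxFi i hi)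
  have hyinj : ∀ i < n, ∀ j < n, y i = y j → i = j := by
    intro i hi j hj hxy
    by_contra hne
    rcases Nat.lt_or_ge i j with h | h
    · exact hynot j hj (hxy ▸ hyearlier i j h hj.le)
    · have h2 : j < i := by omega
      exact hynot i hi (hxy ▸ hyearlier j i h2 hi.le)
  -- coverage
  have hVimg : V = (Finset.range n).image x := by
    have hsubx : (Finset.range n).image x ⊆ V := by
      intro a ha
      obtain ⟨i, hi, rfl⟩ := Finset.mem_image.mp ha
      exact hxV i (Finset.mem_range.mp hi)
    have hcardim : ((Finset.range n).image x).card = n := by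
      rw [Finset.card_image_of_injOn, Finset.card_range]
      intro i hi j hj hij
      exact hxinj i (Finset.mem_range.mp (Finset.mem_coe.mp hi)) j
        (Finset.mem_range.mp (Finset.mem_coe.mp hj)) hij
    exact (Finset.eq_of_subset_of_card_le hsubx (by rw [hcardim, hV])).symm
  have hWimg : W = (Finset.range n).image y := by
    have hsuby : (Finset.range n).image y ⊆ W := by
      intro a ha
      obtain ⟨i, hi, rfl⟩ := Finset.mem_image.mp ha
      exact hyW i (Finset.mem_range.mp hi)
    have hcardim : ((Finset.range n).image y).card = n := by
      rw [Finset.card_image_of_injOn, Finset.card_range]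
      intro i hi j hj hij
      exact hyinj i (Finset.mem_range.mp (Finset.mem_coe.mp hi)) j
        (Finset.mem_range.mp (Finset.mem_coe.mp hj)) hij
    exact (Finset.eq_of_subset_of_card_le hsuby (by rw [hcardim, hW])).symm
  -- pairs
  set P : ℕ → Finset α := fun i => {x i, y i} with hP
  have hPdisj : ∀ i ∈ Finset.range n, ∀ j ∈ Finset.range n, i ≠ j → Disjoint (P i) (P j) := by
    intro i hi j hj hij
    simp only [Finset.mem_range] at hi hj
    rw [Finset.disjoint_left]
    intro a ha hb
    simp only [hP, Finset.mem_insert, Finset.mem_singleton] at ha hb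
    rcases ha with rfl | rfl <;> rcases hb with h | h
    · exact hij (hxinj i hi j hj h)
    · exact Finset.disjoint_left.mp hdisj (hxV i hi) (h ▸ hyW j hj)
    · exact Finset.disjoint_left.mp hdisj (h ▸ hxV j hj) (hyW i hi)
    · exact hij (hyinj i hi j hj h)
  have hcover : (Finset.univ : Finset α) = (Finset.range n).biUnion P := by
    rw [← hunion, hVimg, hWimg]
    ext a
    simp only [Finset.mem_union, Finset.mem_image, Finset.mem_biUnion, hP,
      Finset.mem_insert, Finset.mem_singleton]
    constructor
    · rintro (⟨i, hi, rfl⟩ | ⟨i, hi, rfl⟩)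
      · exact ⟨i, hi, Or.inl rfl⟩
      · exact ⟨i, hi, Or.inr rfl⟩
    · rintro ⟨i, hi, rfl | rfl⟩
      · exact Or.inl ⟨i, hi, rfl⟩
      · exact Or.inr ⟨i, hi, rfl⟩
  -- not both endpoints are leaves
  have hnotboth : ∀ i < n, ¬ (G.degree (x i) = 1 ∧ G.degree (y i) = 1) := by
    rintro i hi ⟨hdx, hdy⟩
    have hNx : G.neighborFinset (x i) = {y i} := by
      have hmem : y i ∈ G.neighborFinset (x i) := by
        rw [SimpleGraph.mem_neighborFinset]; exact hadj i hi
      have h1 : (G.neighborFinset (x i)).card = 1 := by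
        rw [G.card_neighborFinset_eq_degree]; exact hdx
      obtain ⟨a, ha⟩ := Finset.card_eq_one.mp h1
      rw [ha] at hmem ⊢
      rw [Finset.mem_singleton.mp hmem]
    have hNy : G.neighborFinset (y i) = {x i} := by
      have hmem : x i ∈ G.neighborFinset (y i) := by
        rw [SimpleGraph.mem_neighborFinset]; exact (hadj i hi).symm
      have h1 : (G.neighborFinset (y i)).card = 1 := by
        rw [G.card_neighborFinset_eq_degree]; exact hdy
      obtain ⟨a, ha⟩ := Finset.card_eq_one.mp h1
      rw [ha] at hmem ⊢
      rw [Finset.mem_singleton.mp hmem]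
    have hwalk : ∀ (u v : α), G.Walk u v → u = x i ∨ u = y i → v = x i ∨ v = y i := by
      intro u v w
      induction w with
      | nil => exact id
      | cons h p ih =>
        intro hu
        apply ih
        rcases hu with rfl | rfl
        · have hb := (G.mem_neighborFinset _ _).mpr h
          rw [hNx] at hb
          exact Or.inr (Finset.mem_singleton.mp hb)
        · have hb := (G.mem_neighborFinset _ _).mpr h
          rw [hNy] at hb
          exact Or.inl (Finset.mem_singleton.mp hb)
    have hall : ∀ v : α, v = x i ∨ v = y i := by
      intro v
      obtain ⟨w⟩ := htree.isConnected.preconnected (x i) v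
      exact hwalk _ _ w (Or.inl rfl)
    have hss : (Finset.univ : Finset α) ⊆ {x i, y i} := by
      intro v _
      rcases hall v with rfl | rfl <;> simp
    have hle := Finset.card_le_card hss
    rw [Finset.card_univ, hcardα] at hle
    have h2 : ({x i, y i} : Finset α).card ≤ 2 := Finset.card_le_two
    omega
  -- at least one endpoint is a leaf
  have hone : ∀ i < n, G.degree (x i) = 1 ∨ G.degree (y i) = 1 := by
    intro i hi
    by_contra hno
    push_neg at hno
    obtain ⟨hdx, hdy⟩ := hno
    have hpx0 : 0 < G.degree (x i) := by
      rw [G.degree_pos_iff_exists_adj]; exact ⟨y i, hadj i hi⟩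
    have hpy0 : 0 < G.degree (y i) := by
      rw [G.degree_pos_iff_exists_adj]; exact ⟨x i, (hadj i hi).symm⟩
    have h2x : 1 < (G.neighborFinset (x i)).card := by
      rw [G.card_neighborFinset_eq_degree]; omega
    have h2y : 1 < (G.neighborFinset (y i)).card := by
      rw [G.card_neighborFinset_eq_degree]; omega
    obtain ⟨p, hpmem, hpne⟩ := Finset.exists_mem_ne h2x (y i)
    obtain ⟨q, hqmem, hqne⟩ := Finset.exists_mem_ne h2y (x i)
    have hpx : G.Adj (x i) p := (SimpleGraph.mem_neighborFinset _ _ _).mp hpmem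
    have hqy : G.Adj (y i) q := (SimpleGraph.mem_neighborFinset _ _ _).mp hqmem
    have hpW : p ∈ W := by
      rcases hedge hpx with ⟨_, h⟩ | ⟨h, _⟩
      · exact h
      · exact absurd h (hxnW i hi)
    have hqV : q ∈ V := by
      rcases hedge hqy with ⟨h, _⟩ | ⟨_, h⟩
      · exact absurd h (hynV i hi)
      · exact h
    have hpq : p ≠ q := fun h =>
      Finset.disjoint_left.mp hdisj hqV (h ▸ hpW)
    have hnadj : ¬ G.Adj p q := by
      intro hadjpq
      have hw1 : (SimpleGraph.Walk.cons (hadj i hi)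
          (SimpleGraph.Walk.cons hqy SimpleGraph.Walk.nil) : G.Walk (x i) q).IsPath := by
        rw [SimpleGraph.Walk.isPath_def]
        simp only [SimpleGraph.Walk.support_cons, SimpleGraph.Walk.support_nil]
        simp [List.nodup_cons, (hadj i hi).ne, hqne.symm, hqy.ne]
      have hw2 : (SimpleGraph.Walk.cons hpx
          (SimpleGraph.Walk.cons hadjpq SimpleGraph.Walk.nil) : G.Walk (x i) q).IsPath := by
        rw [SimpleGraph.Walk.isPath_def]
        simp only [SimpleGraph.Walk.support_cons, SimpleGraph.Walk.support_nil]
        simp [List.nodup_cons, hpx.ne, hqne.symm, hpq]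
      have heq := SimpleGraph.isAcyclic_iff_path_unique.mp htree.IsAcyclic
        ⟨_, hw1⟩ ⟨_, hw2⟩
      have hweq := Subtype.mk_eq_mk.mp heq
      have hsupp := congrArg SimpleGraph.Walk.support hweq
      simp only [SimpleGraph.Walk.support_cons, SimpleGraph.Walk.support_nil] at hsupp
      have h5 : y i = p := by
        have h6 : ([x i, y i, q] : List α) = [x i, p, q] := hsupp
        simpa using h6
      exact hpne h5.symm
    have hindpq : IndepSet G {p, q} := by
      intro u hu v hv huv
      simp only [Finset.mem_insert, Finset.mem_singleton] at hu hv
      rcases hu with rfl | rfl <;> rcases hv with rfl | rfl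
      · exact G.loopless.irrefl _ huv
      · exact hnadj huv
      · exact hnadj huv.symm
      · exact G.loopless.irrefl _ huv
    obtain ⟨T, hTmax, hTsub⟩ := exists_max_indep G {p, q} hindpq
    have hTcard : T.card = n := by
      have h := hunmixed hTmax (hmax 0 (Nat.zero_le n))
      rwa [hF0, hV] at h
    have hpT : p ∈ T := hTsub (Finset.mem_insert_self _ _)
    have hqT : q ∈ T := hTsub (by simp)
    have hxT : x i ∉ T := fun h => hTmax.1 h hpT hpx
    have hyT : y i ∉ T := fun h => hTmax.1 h hqT hqy
    have hcardle : T.card ≤ ∑ j ∈ Finset.range n, (T ∩ P j).card := by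
      calc T.card = (T ∩ (Finset.range n).biUnion P).card := by
            rw [← hcover, Finset.inter_univ]
        _ = ((Finset.range n).biUnion (fun j => T ∩ P j)).card := by
            rw [Finset.inter_biUnion]
        _ ≤ ∑ j ∈ Finset.range n, (T ∩ P j).card := Finset.card_biUnion_le
    have hPle : ∀ j ∈ (Finset.range n).erase i, (T ∩ P j).card ≤ 1 := by
      intro j hj
      rw [Finset.card_le_one]
      intro a ha b hb
      obtain ⟨haT, haP⟩ := Finset.mem_inter.mp ha
      obtain ⟨hbT, hbP⟩ := Finset.mem_inter.mp hb
      simp only [hP, Finset.mem_insert, Finset.mem_singleton] at haP hbP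
      have hjn : j < n := Finset.mem_range.mp (Finset.mem_of_mem_erase hj)
      by_contra hab
      rcases haP with rfl | rfl <;> rcases hbP with rfl | rfl
      · exact hab rfl
      · exact hTmax.1 haT hbT (hadj j hjn)
      · exact hTmax.1 hbT haT (hadj j hjn)
      · exact hab rfl
    have hPi : (T ∩ P i).card = 0 := by
      rw [Finset.card_eq_zero, Finset.eq_empty_iff_forall_notMem]
      intro a ha
      obtain ⟨haT, haP⟩ := Finset.mem_inter.mp ha
      simp only [hP, Finset.mem_insert, Finset.mem_singleton] at haP
      rcases haP with rfl | rfl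
      · exact hxT haT
      · exact hyT haT
    have hsum : ∑ j ∈ Finset.range n, (T ∩ P j).card ≤ n - 1 := by
      rw [← Finset.add_sum_erase _ _ (Finset.mem_range.mpr hi), hPi, zero_add]
      calc ∑ j ∈ (Finset.range n).erase i, (T ∩ P j).card
          ≤ ((Finset.range n).erase i).card • 1 :=
            Finset.sum_le_card_nsmul _ _ 1 hPle
        _ = n - 1 := by
            rw [Finset.card_erase_of_mem (Finset.mem_range.mpr hi), Finset.card_range]
            simp
    omega
  -- final count
  have hfilterP : ∀ i < n,
      ((P i).filter (fun v => G.degree v = 1)).card = 1 := by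
    intro i hi
    rcases hone i hi with h1 | h1
    · have h2 : ¬ G.degree (y i) = 1 := fun h => hnotboth i hi ⟨h1, h⟩
      have heq : (P i).filter (fun v => G.degree v = 1) = {x i} := by
        ext a
        simp only [hP, Finset.mem_filter, Finset.mem_insert, Finset.mem_singleton]
        constructor
        · rintro ⟨rfl | rfl, hd⟩
          · rfl
          · exact absurd hd h2
        · rintro rfl; exact ⟨Or.inl rfl, h1⟩
      rw [heq, Finset.card_singleton]
    · have h2 : ¬ G.degree (x i) = 1 := fun h => hnotboth i hi ⟨h, h1⟩
      have heq : (P i).filter (fun v => G.degree v = 1) = {y i} := by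
        ext a
        simp only [hP, Finset.mem_filter, Finset.mem_insert, Finset.mem_singleton]
        constructor
        · rintro ⟨rfl | rfl, hd⟩
          · exact absurd hd h2
          · rfl
        · rintro rfl; exact ⟨Or.inr rfl, h1⟩
      rw [heq, Finset.card_singleton]
  calc (Finset.univ.filter (fun v : α => G.degree v = 1)).card
      = (((Finset.range n).biUnion P).filter (fun v : α => G.degree v = 1)).card := by
        rw [← hcover]
    _ = ((Finset.range n).biUnion
          (fun i => (P i).filter (fun v : α => G.degree v = 1))).card := by
        rw [Finset.filter_biUnion]
    _ = ∑ i ∈ Finset.range n, ((P i).filter (fun v : α => G.degree v = 1)).card :=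
        Finset.card_biUnion (fun i hi j hj hij =>
          (hPdisj i hi j hj hij).mono (Finset.filter_subset _ _) (Finset.filter_subset _ _))
    _ = ∑ i ∈ Finset.range n, 1 :=
        Finset.sum_congr rfl (fun i hi => hfilterP i (Finset.mem_range.mp hi))
    _ = n := by simp
end
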